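/- Let G be a group with trivial center, and suppose G = G₁ × ⋯ × Gₙ is an internal direct product of directly indecomposable subgroups. If G = A × B is any internal direct product decomposition, then after renumbering the Gᵢ there is m ∈ {0,…,n} with A = G₁ × ⋯ × G_m and B = G_{m+1} × ⋯ × Gₙ. -/

import Mathlib

private lemma my_normal_iSup {G : Type*} [Group G] {ι : Sort*} (f : ι → Subgroup G)
    (h : ∀ i, (f i).Normal) : (⨆ i, f i).Normal := by
  constructor
  intro x hx g
  refine Subgroup.iSup_induction f (C := fun x => g * x * g⁻¹ ∈ ⨆ i, f i) hx ?_ ?_ ?_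
  · intro i y hy
    exact Subgroup.mem_iSup_of_mem i ((h i).conj_mem y hy g)
  · simpa using Subgroup.one_mem (⨆ i, f i)
  · intro a b ha hb
    have h2 : g * (a * b) * g⁻¹ = (g * a * g⁻¹) * (g * b * g⁻¹) := by group
    rw [h2]; exact mul_mem ha hb

private lemma my_normal_biSup {G : Type*} [Group G] {n : ℕ} (f : Fin n → Subgroup G)
    (h : ∀ i, (f i).Normal) (s : Set (Fin n)) : (⨆ i ∈ s, f i).Normal := by
  refine my_normal_iSup _ fun i => my_normal_iSup _ fun _ => h i

private lemma my_mem_sup {G : Type*} [Group G] (H K : Subgroup G) (hK : K.Normal) {x : G}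
    (hx : x ∈ H ⊔ K) : ∃ h ∈ H, ∃ k ∈ K, x = h * k := by
  rw [← SetLike.mem_coe, Subgroup.mul_normal H K] at hx
  obtain ⟨h, hh, k, hk, hmul⟩ := hx
  exact ⟨h, hh, k, hk, hmul.symm⟩

theorem prop2_unique_decomposition {G : Type*} [Group G]
    (hZ : Subgroup.center G = ⊥) (n : ℕ) (Gs : Fin n → Subgroup G)
    (hnorm : ∀ i, (Gs i).Normal)
    (hcomm : ∀ i j, i ≠ j → ∀ x ∈ Gs i, ∀ y ∈ Gs j, Commute x y)
    (hgen : (⨆ i, Gs i) = ⊤)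
    (hdisj : ∀ i, Gs i ⊓ (⨆ j ∈ ({i}ᶜ : Set (Fin n)), Gs j) = ⊥)
    (hindec : ∀ i, Gs i ≠ ⊥ ∧
      ∀ A B : Subgroup G, A ≤ Gs i → B ≤ Gs i → A.Normal → B.Normal →
        A ⊓ B = ⊥ → A ⊔ B = Gs i → A = ⊥ ∨ B = ⊥)
    (A B : Subgroup G) (hAn : A.Normal) (hBn : B.Normal)
    (hABcomm : ∀ x ∈ A, ∀ y ∈ B, Commute x y)
    (hABinf : A ⊓ B = ⊥) (hABsup : A ⊔ B = ⊤) :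
    ∃ σ : Equiv.Perm (Fin n), ∃ m : ℕ, m ≤ n ∧
      A = (⨆ i ∈ {i : Fin n | (i : ℕ) < m}, Gs (σ i)) ∧
      B = (⨆ i ∈ {i : Fin n | m ≤ (i : ℕ)}, Gs (σ i)) := by
  classical
  -- uniqueness of A-B decompositions
  have huniq : ∀ a a' b b' : G, a ∈ A → a' ∈ A → b ∈ B → b' ∈ B → a * b = a' * b' →
      a = a' ∧ b = b' := by
    intro a a' b b' ha ha' hb hb' he
    have h1 : a'⁻¹ * a = b' * b⁻¹ := by
      calc a'⁻¹ * a = a'⁻¹ * (a * b) * b⁻¹ := by group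
      _ = a'⁻¹ * (a' * b') * b⁻¹ := by rw [he]
      _ = b' * b⁻¹ := by group
    have h2 : a'⁻¹ * a ∈ A ⊓ B :=
      Subgroup.mem_inf.mpr ⟨mul_mem (A.inv_mem ha') ha,
        by rw [h1]; exact mul_mem hb' (B.inv_mem hb)⟩
    rw [hABinf, Subgroup.mem_bot] at h2
    have ha2 : a = a' := by
      rw [inv_mul_eq_one] at h2; exact h2.symm
    refine ⟨ha2, ?_⟩
    rw [ha2] at he
    exact mul_left_cancel he
  -- each Gs i is contained in A or in B
  have hdichot : ∀ i, Gs i ≤ A ∨ Gs i ≤ B := by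
    intro i
    set K : Subgroup G := ⨆ j ∈ ({i}ᶜ : Set (Fin n)), Gs j with hKdef
    have hKn : K.Normal := my_normal_biSup Gs hnorm _
    -- Gs i ⊔ K = ⊤
    have hsupK : Gs i ⊔ K = ⊤ := by
      rw [← hgen]
      apply le_antisymm
      · rw [hgen]; exact le_top
      · refine iSup_le fun j => ?_
        by_cases hji : j = i
        · subst hji; exact le_sup_left
        · exact le_trans (le_iSup₂ (f := fun j _ => Gs j) j hji) le_sup_right
    -- K centralizes Gs i
    have hKc : ∀ x ∈ K, ∀ y ∈ Gs i, Commute x y := by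
      intro x hx
      have : K ≤ Subgroup.centralizer (Gs i) := by
        refine iSup₂_le fun j hji => ?_
        intro z hz
        rw [Subgroup.mem_centralizer_iff]
        intro y hy
        exact (hcomm i j (fun h => hji h.symm) y hy z hz).eq
      intro y hy
      exact ((Subgroup.mem_centralizer_iff.mp (this hx)) y hy).symm
    -- centralizer of K is contained in Gs i
    have hcent : ∀ c : G, (∀ x ∈ K, Commute c x) → c ∈ Gs i := by
      intro c hc
      have hcT : c ∈ Gs i ⊔ K := by rw [hsupK]; exact Subgroup.mem_top c
      obtain ⟨g, hg, k, hk, rfl⟩ := my_mem_sup _ _ hKn hcT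
      -- k is central
      have hkZ : k ∈ Subgroup.center G := by
        rw [Subgroup.mem_center_iff]
        intro y
        have hyT : y ∈ Gs i ⊔ K := by rw [hsupK]; exact Subgroup.mem_top y
        obtain ⟨a, ha, b, hb, rfl⟩ := my_mem_sup _ _ hKn hyT
        have c1 : Commute k a := hKc k hk a ha
        have c2 : Commute k b := by
          -- k commutes with all of K since g*k centralizes K and g does too
          have hgk : ∀ x ∈ K, Commute (g*k) x := hc
          have hgc : ∀ x ∈ K, Commute g x := fun x hx => (hKc x hx g hg).symm
          have := (hgk b hb)
          have hgb := hgc b hb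
          have : Commute k b := by
            have h1 : g * k * b = b * (g * k) := this.eq
            have h2 : g * b = b * g := hgb.eq
            have : g * (k * b) = g * (b * k) := by
              rw [← mul_assoc, h1, ← mul_assoc, ← h2, mul_assoc]
            exact mul_left_cancel this
          exact this
        exact (c1.mul_right c2).symm.eq
      rw [hZ, Subgroup.mem_bot] at hkZ
      rw [hkZ, mul_one]
      exact hg
    -- split Gs i
    have hsplit : ∀ g ∈ Gs i, ∃ a ∈ Gs i ⊓ A, ∃ b ∈ Gs i ⊓ B, g = a * b := by
      intro g hg
      have hgT : g ∈ A ⊔ B := by rw [hABsup]; exact Subgroup.mem_top g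
      obtain ⟨a, ha, b, hb, rfl⟩ := my_mem_sup _ _ hBn hgT
      have haGi : a ∈ Gs i := by
        apply hcent
        intro x hx
        have hxg : Commute x (a * b) := hKc x hx _ hg
        have h1 : (x * a * x⁻¹) * (x * b * x⁻¹) = a * b := by
          have : x * (a * b) * x⁻¹ = a * b := by
            rw [hxg.eq]; group
          calc (x * a * x⁻¹) * (x * b * x⁻¹) = x * (a * b) * x⁻¹ := by group
          _ = a * b := this
        have := huniq (x * a * x⁻¹) a (x * b * x⁻¹) b
          (hAn.conj_mem a ha x) ha (hBn.conj_mem b hb x) hb h1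
        have hxa : x * a * x⁻¹ = a := this.1
        have h4 : x * a = a * x := by
          calc x * a = (x * a * x⁻¹) * x := by group
          _ = a * x := by rw [hxa]
        exact h4.symm
      have hbGi : b ∈ Gs i := by
        have : b = a⁻¹ * (a * b) := by group
        rw [this]; exact mul_mem (inv_mem haGi) hg
      exact ⟨a, Subgroup.mem_inf.mpr ⟨haGi, ha⟩, b, Subgroup.mem_inf.mpr ⟨hbGi, hb⟩, rfl⟩
    have hsupeq : (Gs i ⊓ A) ⊔ (Gs i ⊓ B) = Gs i := by
      apply le_antisymm
      · exact sup_le inf_le_left inf_le_left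
      · intro g hg
        obtain ⟨a, ha, b, hb, rfl⟩ := hsplit g hg
        exact mul_mem (Subgroup.mem_sup_left ha) (Subgroup.mem_sup_right hb)
    have hinfeq : (Gs i ⊓ A) ⊓ (Gs i ⊓ B) = ⊥ := by
      rw [eq_bot_iff, ← hABinf]
      intro x hx
      obtain ⟨h1, h2⟩ := Subgroup.mem_inf.mp hx
      exact Subgroup.mem_inf.mpr ⟨(Subgroup.mem_inf.mp h1).2, (Subgroup.mem_inf.mp h2).2⟩
    have hGAn : (Gs i ⊓ A).Normal := by
      constructor
      intro x hx g
      obtain ⟨h1, h2⟩ := Subgroup.mem_inf.mp hx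
      exact Subgroup.mem_inf.mpr ⟨(hnorm i).conj_mem x h1 g, hAn.conj_mem x h2 g⟩
    have hGBn : (Gs i ⊓ B).Normal := by
      constructor
      intro x hx g
      obtain ⟨h1, h2⟩ := Subgroup.mem_inf.mp hx
      exact Subgroup.mem_inf.mpr ⟨(hnorm i).conj_mem x h1 g, hBn.conj_mem x h2 g⟩
    rcases (hindec i).2 (Gs i ⊓ A) (Gs i ⊓ B) inf_le_left inf_le_left hGAn hGBn
      hinfeq hsupeq with h | h
    · right
      have heq : Gs i = Gs i ⊓ B := by
        conv_lhs => rw [← hsupeq, h, bot_sup_eq]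
      intro x hx
      exact (Subgroup.mem_inf.mp (heq ▸ hx)).2
    · left
      have heq : Gs i = Gs i ⊓ A := by
        conv_lhs => rw [← hsupeq, h, sup_bot_eq]
      intro x hx
      exact (Subgroup.mem_inf.mp (heq ▸ hx)).2
  -- the index set
  set q : Fin n → Prop := fun i => Gs i ≤ A with hqdef
  have hqB : ∀ i, ¬ q i → Gs i ≤ B := by
    intro i hi
    rcases hdichot i with h | h
    · exact absurd h hi
    · exact h
  set P : Subgroup G := ⨆ i ∈ {i | q i}, Gs i with hPdef
  set Q : Subgroup G := ⨆ i ∈ {i | ¬ q i}, Gs i with hQdef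
  have hPA : P ≤ A := iSup₂_le fun i hi => hi
  have hQB : Q ≤ B := iSup₂_le fun i hi => hqB i hi
  have hPn : P.Normal := my_normal_biSup Gs hnorm _
  have hQn : Q.Normal := my_normal_biSup Gs hnorm _
  have hPQ : P ⊔ Q = ⊤ := by
    rw [← hgen]
    apply le_antisymm
    · rw [hgen]; exact le_top
    · refine iSup_le fun i => ?_
      by_cases hi : q i
      · exact le_trans (le_iSup₂ (f := fun i _ => Gs i) i hi) le_sup_left
      · exact le_trans (le_iSup₂ (f := fun i _ => Gs i) i hi) le_sup_right
  have hAP : A = P := by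
    apply le_antisymm ?_ hPA
    intro a ha
    have haT : a ∈ P ⊔ Q := by rw [hPQ]; exact Subgroup.mem_top a
    obtain ⟨u, hu, v, hv, rfl⟩ := my_mem_sup _ _ hQn haT
    have hvAB : v ∈ A ⊓ B := by
      refine Subgroup.mem_inf.mpr ⟨?_, hQB hv⟩
      have hv2 : v = u⁻¹ * (u * v) := by group
      rw [hv2]; exact mul_mem (A.inv_mem (hPA hu)) ha
    rw [hABinf, Subgroup.mem_bot] at hvAB
    rw [hvAB, mul_one]
    exact hu
  have hBQ : B = Q := by
    apply le_antisymm ?_ hQB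
    intro b hb
    have hbT : b ∈ Q ⊔ P := by rw [sup_comm, hPQ]; exact Subgroup.mem_top b
    obtain ⟨u, hu, v, hv, rfl⟩ := my_mem_sup _ _ hPn hbT
    have hvAB : v ∈ A ⊓ B := by
      refine Subgroup.mem_inf.mpr ⟨hPA hv, ?_⟩
      have hv2 : v = u⁻¹ * (u * v) := by group
      rw [hv2]; exact mul_mem (B.inv_mem (hQB hu)) hb
    rw [hABinf, Subgroup.mem_bot] at hvAB
    rw [hvAB, mul_one]
    exact hu
  -- build the permutation
  set m : ℕ := Fintype.card {i : Fin n // q i} with hmdef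
  set p : Fin n → Prop := fun i => (i : ℕ) < m with hpdef
  have hmn : m ≤ n := by
    calc m = Fintype.card {i : Fin n // q i} := rfl
    _ ≤ Fintype.card (Fin n) := Fintype.card_subtype_le _
    _ = n := Fintype.card_fin n
  have hcardp : Fintype.card {i : Fin n // p i} = m := by
    have e : {i : Fin n // p i} ≃ Fin m :=
      { toFun := fun x => ⟨(x.1 : ℕ), x.2⟩
        invFun := fun j => ⟨⟨(j : ℕ), lt_of_lt_of_le j.2 hmn⟩, j.2⟩
        left_inv := fun x => by ext; rfl
        right_inv := fun j => by ext; rfl }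
    rw [Fintype.card_congr e, Fintype.card_fin]
  have e1 : {i : Fin n // p i} ≃ {i : Fin n // q i} :=
    Fintype.equivOfCardEq (by rw [hcardp])
  have e2 : {i : Fin n // ¬ p i} ≃ {i : Fin n // ¬ q i} :=
    Fintype.equivOfCardEq (by
      rw [Fintype.card_subtype_compl, Fintype.card_subtype_compl, hcardp])
  set σ : Equiv.Perm (Fin n) :=
    ((Equiv.sumCompl p).symm.trans ((e1.sumCongr e2).trans (Equiv.sumCompl q))) with hσdef
  have hσp : ∀ i, p i → q (σ i) := by
    intro i hi
    have : σ i = (e1 ⟨i, hi⟩ : {i : Fin n // q i}).1 := by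
      simp [hσdef, Equiv.sumCompl_symm_apply_of_pos (p := p) hi]
    rw [this]
    exact (e1 ⟨i, hi⟩).2
  have hσnp : ∀ i, ¬ p i → ¬ q (σ i) := by
    intro i hi
    have : σ i = (e2 ⟨i, hi⟩ : {i : Fin n // ¬ q i}).1 := by
      simp [hσdef, Equiv.sumCompl_symm_apply_of_neg (p := p) hi]
    rw [this]
    exact (e2 ⟨i, hi⟩).2
  have hσiff : ∀ i, q (σ i) ↔ p i := by
    intro i
    by_cases hi : p i
    · exact ⟨fun _ => hi, fun _ => hσp i hi⟩
    · exact ⟨fun h => absurd h (hσnp i hi), fun h => absurd h hi⟩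
  refine ⟨σ, m, hmn, ?_, ?_⟩
  · rw [hAP]
    apply le_antisymm
    · refine iSup₂_le fun j hj => ?_
      have hj2 : p (σ.symm j) := by
        rw [← hσiff]
        simpa using hj
      refine le_trans ?_ (le_iSup₂ (f := fun i (_ : i ∈ {i : Fin n | (i : ℕ) < m}) => Gs (σ i)) (σ.symm j) hj2)
      simp
    · refine iSup₂_le fun i hi => ?_
      have : q (σ i) := hσp i hi
      exact le_iSup₂ (f := fun i (_ : i ∈ {i | q i}) => Gs i) (σ i) this
  · rw [hBQ]
    apply le_antisymm
    · refine iSup₂_le fun j hj => ?_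
      have hj2 : ¬ p (σ.symm j) := by
        rw [← hσiff]
        simpa using hj
      have hj3 : m ≤ ((σ.symm j : Fin n) : ℕ) := not_lt.mp hj2
      refine le_trans ?_ (le_iSup₂ (f := fun i (_ : i ∈ {i : Fin n | m ≤ (i : ℕ)}) => Gs (σ i)) (σ.symm j) hj3)
      simp
    · refine iSup₂_le fun i hi => ?_
      have hi2 : ¬ p i := not_lt.mpr hi
      have : ¬ q (σ i) := hσnp i hi2
      exact le_iSup₂ (f := fun i (_ : i ∈ {i | ¬ q i}) => Gs i) (σ i) this
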